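/- Fix α ≥ 2 and let π(x) = (1 + x²)^{−(α + 1/2)} / B(α, 1/2) for x ∈ ℝ (the Student-type density). Then π is a probability density (∫_ℝ (1 + x²)^{−(α+1/2)} dx = B(α, 1/2)), its first moment is m₁ = 0, its second moment is m₂ = 1/(2α − 2); for the variance function σ²(x)/2 = 1 + x² the average variance is σ̂²/2 = (2α − 1)/(2α − 2), and hence the ratio σ̂²/(2(m₂ − m₁²)) = 2α − 1, which equals the smallest nonzero discrete eigenvalue λ₁ = 1·(2α − 1) of the Student diffusion; thus the Student process attains the optimal convergence rate. -/

import Mathlib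

open MeasureTheory Set

private lemma realBeta {u v : ℝ} (hu : 0 < u) (hv : 0 < v) :
    ∫ t in (0:ℝ)..1, t ^ (u - 1) * (1 - t) ^ (v - 1) =
      Real.Gamma u * Real.Gamma v / Real.Gamma (u + v) := by
  have h := Complex.Gamma_mul_Gamma_eq_betaIntegral (s := (u:ℂ)) (t := (v:ℂ))
    (by simpa using hu) (by simpa using hv)
  have hbeta : Complex.betaIntegral u v =
      ((∫ t in (0:ℝ)..1, t ^ (u - 1) * (1 - t) ^ (v - 1) : ℝ) : ℂ) := by
    rw [Complex.betaIntegral, ← intervalIntegral.integral_ofReal]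
    refine intervalIntegral.integral_congr fun x hx => ?_
    rw [uIcc_of_le zero_le_one] at hx
    rw [Complex.ofReal_mul, Complex.ofReal_cpow hx.1,
      Complex.ofReal_cpow (by linarith [hx.2] : (0:ℝ) ≤ 1 - x)]
    push_cast
    ring
  rw [hbeta, ← Complex.ofReal_add, Complex.Gamma_ofReal, Complex.Gamma_ofReal,
    Complex.Gamma_ofReal] at h
  have h' : Real.Gamma u * Real.Gamma v =
      Real.Gamma (u + v) * ∫ t in (0:ℝ)..1, t ^ (u - 1) * (1 - t) ^ (v - 1) := by
    exact_mod_cast h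
  have hG : Real.Gamma (u + v) ≠ 0 := (Real.Gamma_pos_of_pos (by linarith)).ne'
  field_simp [hG] at h' ⊢
  linarith [h']

private lemma subst_Ioi (g : ℝ → ℝ) :
    ∫ x in Ioi (0:ℝ), g x =
      ∫ t in Ioo (0:ℝ) 1,
        |1 / (2 * Real.sqrt (t / (1 - t)) * (1 - t) ^ 2)| * g (Real.sqrt (t / (1 - t))) := by
  have himg : (fun t : ℝ => Real.sqrt (t / (1 - t))) '' Ioo 0 1 = Ioi 0 := by
    ext y
    constructor
    · rintro ⟨t, ⟨ht0, ht1⟩, rfl⟩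
      exact Real.sqrt_pos.mpr (div_pos ht0 (by linarith))
    · intro hy
      have hy0 : (0:ℝ) < y := hy
      have h1 : (0:ℝ) < 1 + y ^ 2 := by positivity
      refine ⟨y ^ 2 / (1 + y ^ 2), ⟨by positivity, by rw [div_lt_one h1]; nlinarith⟩, ?_⟩
      have h2 : y ^ 2 / (1 + y ^ 2) / (1 - y ^ 2 / (1 + y ^ 2)) = y ^ 2 := by
        field_simp
        ring
      simp only [h2]
      exact Real.sqrt_sq hy0.le
  have hderiv : ∀ t ∈ Ioo (0:ℝ) 1,
      HasDerivWithinAt (fun t : ℝ => Real.sqrt (t / (1 - t)))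
        (1 / (2 * Real.sqrt (t / (1 - t)) * (1 - t) ^ 2)) (Ioo 0 1) t := by
    rintro t ⟨ht0, ht1⟩
    have h1t : (0:ℝ) < 1 - t := by linarith
    have hq : (0:ℝ) < t / (1 - t) := div_pos ht0 h1t
    have hd : HasDerivAt (fun t : ℝ => t / (1 - t))
        ((1 * (1 - t) - t * (0 - 1)) / (1 - t) ^ 2) t :=
      (hasDerivAt_id t).div ((hasDerivAt_const t (1:ℝ)).sub (hasDerivAt_id t)) h1t.ne'
    have hc := (Real.hasDerivAt_sqrt hq.ne').comp t hd
    have hsq : (0:ℝ) < Real.sqrt (t / (1 - t)) := Real.sqrt_pos.mpr hq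
    have heq : (1 / (2 * Real.sqrt (t / (1 - t))) * ((1 * (1 - t) - t * (0 - 1)) / (1 - t) ^ 2))
        = 1 / (2 * Real.sqrt (t / (1 - t)) * (1 - t) ^ 2) := by
      field_simp
      ring
    rw [heq] at hc
    exact hc.hasDerivWithinAt
  have hinj : InjOn (fun t : ℝ => Real.sqrt (t / (1 - t))) (Ioo 0 1) := by
    rintro a ⟨ha0, ha1⟩ b ⟨hb0, hb1⟩ hab
    have h1a : (0:ℝ) < 1 - a := by linarith
    have h1b : (0:ℝ) < 1 - b := by linarith
    have := (Real.sqrt_inj (div_pos ha0 h1a).le (div_pos hb0 h1b).le).mp hab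
    rw [div_eq_div_iff h1a.ne' h1b.ne'] at this
    nlinarith
  rw [← himg, integral_image_eq_integral_abs_deriv_smul measurableSet_Ioo hderiv hinj]
  simp [smul_eq_mul]

private lemma pointwise0 (s t : ℝ) (ht0 : 0 < t) (ht1 : t < 1) :
    |1 / (2 * Real.sqrt (t / (1 - t)) * (1 - t) ^ 2)|
        * (1 + Real.sqrt (t / (1 - t)) ^ 2) ^ (-s)
      = 1 / 2 * (t ^ ((1:ℝ) / 2 - 1) * (1 - t) ^ (s - 1 / 2 - 1)) := by
  have h1t : (0:ℝ) < 1 - t := by linarith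
  have hq : (0:ℝ) < t / (1 - t) := div_pos ht0 h1t
  have hsq : Real.sqrt (t / (1 - t)) = t ^ ((1:ℝ)/2) / (1 - t) ^ ((1:ℝ)/2) := by
    rw [Real.sqrt_eq_rpow, Real.div_rpow ht0.le h1t.le]
  have hsq2 : Real.sqrt (t / (1 - t)) ^ 2 = t / (1 - t) := Real.sq_sqrt hq.le
  have h1 : 1 + t / (1 - t) = (1 - t)⁻¹ := by field_simp; ring
  have hpow : ((1 - t)⁻¹) ^ (-s) = (1 - t) ^ s := by
    rw [Real.inv_rpow h1t.le, ← Real.rpow_neg h1t.le, neg_neg]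
  have hpos : 0 < 1 / (2 * Real.sqrt (t / (1 - t)) * (1 - t) ^ 2) := by
    have := Real.sqrt_pos.mpr hq
    positivity
  rw [abs_of_pos hpos, hsq2, h1, hpow, hsq, Real.rpow_sub ht0, Real.rpow_sub h1t,
    Real.rpow_sub h1t, Real.rpow_one, Real.rpow_one]
  have hA : (0:ℝ) < t ^ ((1:ℝ)/2) := Real.rpow_pos_of_pos ht0 _
  have hC : (0:ℝ) < (1 - t) ^ ((1:ℝ)/2) := Real.rpow_pos_of_pos h1t _
  set A := t ^ ((1:ℝ)/2) with hA'
  set C := (1 - t) ^ ((1:ℝ)/2) with hC'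
  have hA2 : A ^ 2 = t := by
    rw [hA', ← Real.rpow_natCast (t ^ ((1:ℝ)/2)) 2, ← Real.rpow_mul ht0.le]; norm_num
  have hC2 : C ^ 2 = 1 - t := by
    rw [hC', ← Real.rpow_natCast ((1 - t) ^ ((1:ℝ)/2)) 2, ← Real.rpow_mul h1t.le]; norm_num
  rw [← hC2, ← hA2]
  field_simp

private lemma pointwise2 (s t : ℝ) (ht0 : 0 < t) (ht1 : t < 1) :
    |1 / (2 * Real.sqrt (t / (1 - t)) * (1 - t) ^ 2)|
        * (Real.sqrt (t / (1 - t)) ^ 2 * (1 + Real.sqrt (t / (1 - t)) ^ 2) ^ (-s))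
      = 1 / 2 * (t ^ ((3:ℝ) / 2 - 1) * (1 - t) ^ (s - 3 / 2 - 1)) := by
  have h1t : (0:ℝ) < 1 - t := by linarith
  have hq : (0:ℝ) < t / (1 - t) := div_pos ht0 h1t
  have hsq : Real.sqrt (t / (1 - t)) = t ^ ((1:ℝ)/2) / (1 - t) ^ ((1:ℝ)/2) := by
    rw [Real.sqrt_eq_rpow, Real.div_rpow ht0.le h1t.le]
  have hsq2 : Real.sqrt (t / (1 - t)) ^ 2 = t / (1 - t) := Real.sq_sqrt hq.le
  have h1 : 1 + t / (1 - t) = (1 - t)⁻¹ := by field_simp; ring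
  have hpow : ((1 - t)⁻¹) ^ (-s) = (1 - t) ^ s := by
    rw [Real.inv_rpow h1t.le, ← Real.rpow_neg h1t.le, neg_neg]
  have hpos : 0 < 1 / (2 * Real.sqrt (t / (1 - t)) * (1 - t) ^ 2) := by
    have := Real.sqrt_pos.mpr hq
    positivity
  rw [abs_of_pos hpos, hsq2, h1, hpow, hsq, Real.rpow_sub ht0, Real.rpow_sub h1t,
    Real.rpow_sub h1t, Real.rpow_one, Real.rpow_one]
  have hA : (0:ℝ) < t ^ ((1:ℝ)/2) := Real.rpow_pos_of_pos ht0 _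
  have hC : (0:ℝ) < (1 - t) ^ ((1:ℝ)/2) := Real.rpow_pos_of_pos h1t _
  have hA3 : t ^ ((3:ℝ)/2) = (t ^ ((1:ℝ)/2)) ^ 3 := by
    rw [← Real.rpow_natCast (t ^ ((1:ℝ)/2)) 3, ← Real.rpow_mul ht0.le]; norm_num
  have hC3 : (1 - t) ^ ((3:ℝ)/2) = ((1 - t) ^ ((1:ℝ)/2)) ^ 3 := by
    rw [← Real.rpow_natCast ((1 - t) ^ ((1:ℝ)/2)) 3, ← Real.rpow_mul h1t.le]; norm_num
  rw [hA3, hC3]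
  set A := t ^ ((1:ℝ)/2) with hA'
  set C := (1 - t) ^ ((1:ℝ)/2) with hC'
  have hA2 : A ^ 2 = t := by
    rw [hA', ← Real.rpow_natCast (t ^ ((1:ℝ)/2)) 2, ← Real.rpow_mul ht0.le]; norm_num
  have hC2 : C ^ 2 = 1 - t := by
    rw [hC', ← Real.rpow_natCast ((1 - t) ^ ((1:ℝ)/2)) 2, ← Real.rpow_mul h1t.le]; norm_num
  rw [← hC2, ← hA2]
  field_simp

private lemma int0 (s : ℝ) (hs : 1 < s) :
    (∫ x : ℝ, (1 + x ^ 2) ^ (-s)) =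
      Real.Gamma (1/2) * Real.Gamma (s - 1/2) / Real.Gamma s := by
  have habs : (∫ x : ℝ, (1 + x ^ 2) ^ (-s)) =
      ∫ x : ℝ, (fun y : ℝ => (1 + y ^ 2) ^ (-s)) |x| := by
    simp only [sq_abs]
  rw [habs, integral_comp_abs (f := fun y : ℝ => (1 + y ^ 2) ^ (-s)),
    subst_Ioi (fun y : ℝ => (1 + y ^ 2) ^ (-s))]
  rw [setIntegral_congr_fun measurableSet_Ioo
    (fun t ht => pointwise0 s t ht.1 ht.2)]
  rw [integral_const_mul _, ← integral_Ioc_eq_integral_Ioo,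
    ← intervalIntegral.integral_of_le zero_le_one,
    realBeta (by norm_num : (0:ℝ) < 1/2) (by linarith : (0:ℝ) < s - 1/2),
    show (1:ℝ)/2 + (s - 1/2) = s by ring]
  ring

private lemma int2 (s : ℝ) (hs : 2 < s) :
    (∫ x : ℝ, x ^ 2 * (1 + x ^ 2) ^ (-s)) =
      Real.Gamma (3/2) * Real.Gamma (s - 3/2) / Real.Gamma s := by
  have habs : (∫ x : ℝ, x ^ 2 * (1 + x ^ 2) ^ (-s)) =
      ∫ x : ℝ, (fun y : ℝ => y ^ 2 * (1 + y ^ 2) ^ (-s)) |x| := by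
    simp only [sq_abs]
  rw [habs, integral_comp_abs (f := fun y : ℝ => y ^ 2 * (1 + y ^ 2) ^ (-s)),
    subst_Ioi (fun y : ℝ => y ^ 2 * (1 + y ^ 2) ^ (-s))]
  rw [setIntegral_congr_fun measurableSet_Ioo
    (fun t ht => pointwise2 s t ht.1 ht.2)]
  rw [integral_const_mul _, ← integral_Ioc_eq_integral_Ioo,
    ← intervalIntegral.integral_of_le zero_le_one,
    realBeta (by norm_num : (0:ℝ) < 3/2) (by linarith : (0:ℝ) < s - 3/2),
    show (3:ℝ)/2 + (s - 3/2) = s by ring]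
  ring

/-- For the Student-type density
`ρ(x) = (1+x²)^{-(α+1/2)} / B(α, 1/2)` on `ℝ` (`α ≥ 2`): `ρ` is a probability density
(`∫ (1+x²)^{-(α+1/2)} dx = B(α, 1/2)`), its first moment is `m₁ = 0`, its second moment is
`m₂ = 1/(2α-2)`; for the variance function `σ²(x)/2 = 1+x²` the average variance is
`σ̂²/2 = (2α-1)/(2α-2)`, and the ratio `σ̂²/(2(m₂-m₁²)) = 2α-1 = 1·(2α-1)`, the smallest
nonzero discrete eigenvalue of the Student diffusion, so the Student process attains the
optimal convergence rate. -/
theorem statement14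
    (α : ℝ) (hα : 2 ≤ α)
    (B : ℝ → ℝ → ℝ)
    (hB : ∀ a b, B a b = Real.Gamma a * Real.Gamma b / Real.Gamma (a + b))
    (ρ : ℝ → ℝ)
    (hρ : ∀ x, ρ x = (1 + x ^ 2) ^ (-(α + 1 / 2)) / B α (1 / 2)) :
    (∫ x : ℝ, (1 + x ^ 2) ^ (-(α + 1 / 2))) = B α (1 / 2) ∧
    (∫ x : ℝ, x * ρ x) = 0 ∧
    (∫ x : ℝ, x ^ 2 * ρ x) = 1 / (2 * α - 2) ∧
    (∫ x : ℝ, (1 + x ^ 2) * ρ x) = (2 * α - 1) / (2 * α - 2) ∧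
    (∫ x : ℝ, (1 + x ^ 2) * ρ x) /
        ((∫ x : ℝ, x ^ 2 * ρ x) - (∫ x : ℝ, x * ρ x) ^ 2)
      = 1 * (2 * α - 1) := by
  have hα0 : (0:ℝ) < α := by linarith
  have hG12 : (0:ℝ) < Real.Gamma (1/2) := Real.Gamma_pos_of_pos (by norm_num)
  have hGα : (0:ℝ) < Real.Gamma α := Real.Gamma_pos_of_pos hα0
  have hGα12 : (0:ℝ) < Real.Gamma (α + 1/2) := Real.Gamma_pos_of_pos (by linarith)
  have hGα1 : (0:ℝ) < Real.Gamma (α - 1) := Real.Gamma_pos_of_pos (by linarith)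
  have hBval : B α (1/2) = Real.Gamma α * Real.Gamma (1/2) / Real.Gamma (α + 1/2) := hB α (1/2)
  have hBpos : (0:ℝ) < B α (1/2) :=
    hBval ▸ div_pos (mul_pos hGα hG12) hGα12
  -- first conjunct
  have E0 : (∫ x : ℝ, (1 + x ^ 2) ^ (-(α + 1 / 2))) = B α (1/2) := by
    have h := int0 (α + 1/2) (by linarith)
    rw [show α + 1/2 - 1/2 = α by ring] at h
    rw [h, hBval]; ring
  -- second conjunct
  have E1 : (∫ x : ℝ, x * ρ x) = 0 := by
    have hneg : (∫ x : ℝ, x * ρ x) = ∫ x : ℝ, (-x) * ρ (-x) :=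
      (integral_neg_eq_self (fun x : ℝ => x * ρ x) volume).symm
    have hodd : ∀ x : ℝ, (-x) * ρ (-x) = -(x * ρ x) := by
      intro x
      have hx2 : ρ (-x) = ρ x := by
        rw [hρ, hρ, show (-x) ^ 2 = x ^ 2 by ring]
      rw [hx2]; ring
    simp only [hodd] at hneg
    rw [integral_neg] at hneg
    linarith
  -- gamma identities
  have h32 : Real.Gamma (3/2) = 1/2 * Real.Gamma (1/2) := by
    rw [show (3:ℝ)/2 = 1/2 + 1 by norm_num, Real.Gamma_add_one (by norm_num : (1:ℝ)/2 ≠ 0)]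
  have hGrec : Real.Gamma α = (α - 1) * Real.Gamma (α - 1) := by
    have h := Real.Gamma_add_one (show α - 1 ≠ 0 by intro h; linarith [sub_eq_zero.mp h])
    rw [show α - 1 + 1 = α by ring] at h
    exact h
  have h2α2 : (2:ℝ) * α - 2 ≠ 0 := by intro h; nlinarith
  -- third conjunct
  have E2 : (∫ x : ℝ, x ^ 2 * ρ x) = 1 / (2 * α - 2) := by
    have hint : (∫ x : ℝ, x ^ 2 * ρ x) =
        (∫ x : ℝ, x ^ 2 * (1 + x ^ 2) ^ (-(α + 1 / 2))) / B α (1/2) := by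
      rw [← integral_div]
      congr 1; funext x; rw [hρ]; ring
    have h := int2 (α + 1/2) (by linarith)
    rw [show α + 1/2 - 3/2 = α - 1 by ring] at h
    rw [hint, h, h32, hBval, hGrec]
    have hne4 : α - 1 ≠ 0 := by intro hh; linarith [sub_eq_zero.mp hh]
    field_simp [hGα12.ne', hGα1.ne', hG12.ne', hne4, h2α2]
  -- integrability
  have hcont : Continuous fun x : ℝ => (1 + x ^ 2) ^ (-(α + 1 / 2)) :=
    Continuous.rpow_const (by continuity) (fun x => Or.inl (by positivity))
  have hbound : ∀ x : ℝ, (1 + x ^ 2) ^ (-(α + 1 / 2)) ≤ (1 + x ^ 2)⁻¹ := by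
    intro x
    rw [← Real.rpow_neg_one]
    exact Real.rpow_le_rpow_of_exponent_le (by nlinarith) (by linarith)
  have i1 : Integrable fun x : ℝ => (1 + x ^ 2) ^ (-(α + 1 / 2)) := by
    refine integrable_inv_one_add_sq.mono hcont.aestronglyMeasurable (ae_of_all _ fun x => ?_)
    rw [Real.norm_eq_abs, Real.norm_eq_abs, abs_of_pos (by positivity),
      abs_of_pos (by positivity : (0:ℝ) < (1 + x ^ 2)⁻¹)]
    exact hbound x
  have i2 : Integrable fun x : ℝ => x ^ 2 * (1 + x ^ 2) ^ (-(α + 1 / 2)) := by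
    have hcont2 : Continuous fun x : ℝ => x ^ 2 * (1 + x ^ 2) ^ (-(α + 1 / 2)) :=
      (continuous_pow 2).mul hcont
    refine integrable_inv_one_add_sq.mono hcont2.aestronglyMeasurable (ae_of_all _ fun x => ?_)
    rw [Real.norm_eq_abs, Real.norm_eq_abs, abs_of_nonneg (by positivity),
      abs_of_pos (by positivity : (0:ℝ) < (1 + x ^ 2)⁻¹)]
    calc x ^ 2 * (1 + x ^ 2) ^ (-(α + 1 / 2))
        ≤ (1 + x ^ 2) * (1 + x ^ 2) ^ (-(α + 1 / 2)) :=
          mul_le_mul_of_nonneg_right (by linarith [sq_nonneg x])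
            (Real.rpow_nonneg (by positivity) _)
      _ = (1 + x ^ 2) ^ (-(α + 1 / 2) + 1) := by
          rw [Real.rpow_add (by positivity : (0:ℝ) < 1 + x ^ 2), Real.rpow_one]; ring
      _ ≤ (1 + x ^ 2) ^ (-1 : ℝ) :=
          Real.rpow_le_rpow_of_exponent_le (by nlinarith) (by linarith)
      _ = (1 + x ^ 2)⁻¹ := Real.rpow_neg_one _
  have hρf : ρ = fun x => (1 + x ^ 2) ^ (-(α + 1 / 2)) / B α (1 / 2) := funext hρ
  have iρ : Integrable ρ := by rw [hρf]; exact i1.div_const _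
  have iρ2 : Integrable fun x : ℝ => x ^ 2 * ρ x := by
    have h : (fun x : ℝ => x ^ 2 * ρ x)
        = fun x => (x ^ 2 * (1 + x ^ 2) ^ (-(α + 1 / 2))) / B α (1 / 2) := by
      funext x; rw [hρ]; ring
    rw [h]; exact i2.div_const _
  have P0 : (∫ x : ℝ, ρ x) = 1 := by rw [hρf, integral_div, E0, div_self hBpos.ne']
  have E3 : (∫ x : ℝ, (1 + x ^ 2) * ρ x) = (2 * α - 1) / (2 * α - 2) := by
    have hsum : (fun x : ℝ => (1 + x ^ 2) * ρ x) = fun x => ρ x + x ^ 2 * ρ x := by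
      funext x; ring
    rw [hsum, integral_add iρ iρ2, P0, E2]
    rw [eq_div_iff h2α2, add_mul, one_div_mul_cancel h2α2]
    ring
  have E4 : (∫ x : ℝ, (1 + x ^ 2) * ρ x) /
      ((∫ x : ℝ, x ^ 2 * ρ x) - (∫ x : ℝ, x * ρ x) ^ 2) = 1 * (2 * α - 1) := by
    rw [E3, E2, E1]
    norm_num
    field_simp
    exact mul_div_cancel_right₀ _ (by intro hh; apply h2α2; linarith)
  exact ⟨E0, E1, E2, E3, E4⟩
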